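/- Let S be a positive definite d×d complex matrix, let M be a Hermitian d×d matrix with 0 ≤ M ≤ I, and let v ∈ ℂ^d be a unit vector. Then ⟨v, M v⟩ ≤ √(Tr(S M)) · ⟨v, S^{−1/2} v⟩. -/

import Mathlib

open Matrix ComplexOrder
noncomputable def Matrix.PosSemidef.sqrt {n : Type*} {𝕜 : Type*} [Fintype n] [RCLike 𝕜]
    [DecidableEq n] {A : Matrix n n 𝕜} (hA : A.PosSemidef) : Matrix n n 𝕜 :=
  hA.1.eigenvectorUnitary.1 * diagonal ((↑) ∘ (√·) ∘ hA.1.eigenvalues) *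
  (star hA.1.eigenvectorUnitary : Matrix n n 𝕜)

namespace Matrix.PosSemidef

lemma posSemidef_sqrt {n : Type*} {𝕜 : Type*} [Fintype n] [RCLike 𝕜]
    [DecidableEq n] {A : Matrix n n 𝕜} (hA : A.PosSemidef) : hA.sqrt.PosSemidef := by
  unfold Matrix.PosSemidef.sqrt
  have hD : (diagonal ((↑) ∘ (√·) ∘ hA.1.eigenvalues) : Matrix n n 𝕜).PosSemidef := by
    rw [posSemidef_diagonal_iff]
    intro i
    simp [Real.sqrt_nonneg]
  have := hD.mul_mul_conjTranspose_same (hA.1.eigenvectorUnitary : Matrix n n 𝕜)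
  simpa [Unitary.coe_star, star_eq_conjTranspose] using this

lemma sqrt_mul_self {n : Type*} {𝕜 : Type*} [Fintype n] [RCLike 𝕜]
    [DecidableEq n] {A : Matrix n n 𝕜} (hA : A.PosSemidef) : hA.sqrt * hA.sqrt = A := by
  unfold Matrix.PosSemidef.sqrt
  conv_rhs => rw [hA.1.spectral_theorem, Unitary.conjStarAlgAut_apply]
  have hU : (star hA.1.eigenvectorUnitary : Matrix n n 𝕜) * hA.1.eigenvectorUnitary.1 = 1 :=
    Unitary.coe_star_mul_self _
  have hDD : (diagonal ((↑) ∘ (√·) ∘ hA.1.eigenvalues) : Matrix n n 𝕜) *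
      diagonal ((↑) ∘ (√·) ∘ hA.1.eigenvalues) = diagonal (RCLike.ofReal ∘ hA.1.eigenvalues) := by
    rw [diagonal_mul_diagonal]
    congr 1
    funext i
    simp only [Function.comp_apply, ← RCLike.ofReal_mul]
    rw [Real.mul_self_sqrt (hA.eigenvalues_nonneg i)]
  calc _ = hA.1.eigenvectorUnitary.1 * (diagonal ((↑) ∘ (√·) ∘ hA.1.eigenvalues) *
      ((star hA.1.eigenvectorUnitary : Matrix n n 𝕜) * hA.1.eigenvectorUnitary.1) *
      diagonal ((↑) ∘ (√·) ∘ hA.1.eigenvalues)) * (star hA.1.eigenvectorUnitary : Matrix n n 𝕜) := by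
        simp only [Matrix.mul_assoc]
    _ = _ := by rw [hU, Matrix.mul_one, hDD]

end Matrix.PosSemidef

namespace BKaux

variable {d : ℕ}

lemma trace_re_nonneg {X : Matrix (Fin d) (Fin d) ℂ} (hX : X.PosSemidef) :
    0 ≤ X.trace.re := by
  rw [Matrix.trace, Complex.re_sum]
  refine Finset.sum_nonneg fun i _ => ?_
  have h := hX.re_dotProduct_nonneg (Pi.single i 1)
  have he : dotProduct (star (Pi.single i 1)) (X *ᵥ Pi.single i 1) = X i i := by
    simp [dotProduct, Matrix.mulVec, Pi.single_apply, mul_ite]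
  rw [he] at h
  simpa using h

lemma trace_re_mono {X Y : Matrix (Fin d) (Fin d) ℂ} (h : (X - Y).PosSemidef) :
    Y.trace.re ≤ X.trace.re := by
  have := trace_re_nonneg h
  rw [Matrix.trace_sub, Complex.sub_re] at this
  linarith

lemma trace_key (C D : Matrix (Fin d) (Fin d) ℂ) (hD : D.IsHermitian) :
    ((C * D).trace).re = ∑ p : Fin d × Fin d, (C p.1 p.2 * (starRingEnd ℂ) (D p.1 p.2)).re := by
  have entry : ∀ i j : Fin d, D j i = (starRingEnd ℂ) (D i j) := by
    intro i j
    simp only [← Complex.star_def, ← Matrix.conjTranspose_apply, hD.eq]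
  calc ((C * D).trace).re = ∑ i, ∑ j, (C i j * D j i).re := by
        simp [Matrix.trace, Matrix.diag, Matrix.mul_apply, Complex.re_sum]
    _ = ∑ p : Fin d × Fin d, (C p.1 p.2 * (starRingEnd ℂ) (D p.1 p.2)).re := by
        rw [← Finset.sum_product']
        exact Finset.sum_congr rfl fun p _ => by rw [entry]

/-- Cauchy–Schwarz for the trace inner product, Hermitian version. -/
lemma trace_CS {A B : Matrix (Fin d) (Fin d) ℂ} (hA : A.IsHermitian) (hB : B.IsHermitian) :
    ((A * B).trace).re ≤
      Real.sqrt (((A * A).trace).re) * Real.sqrt (((B * B).trace).re) := by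
  have h2 : ∀ (C : Matrix (Fin d) (Fin d) ℂ), C.IsHermitian →
      ∑ p : Fin d × Fin d, ‖C p.1 p.2‖ ^ 2 = ((C * C).trace).re := by
    intro C hC
    rw [trace_key C C hC]
    refine Finset.sum_congr rfl fun p _ => ?_
    rw [Complex.mul_conj, Complex.ofReal_re, Complex.sq_norm]
  rw [trace_key A B hB, ← h2 A hA, ← h2 B hB]
  calc ∑ p : Fin d × Fin d, (A p.1 p.2 * (starRingEnd ℂ) (B p.1 p.2)).re
      ≤ ∑ p : Fin d × Fin d, ‖A p.1 p.2‖ * ‖B p.1 p.2‖ := by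
        refine Finset.sum_le_sum fun p _ => ?_
        calc (A p.1 p.2 * (starRingEnd ℂ) (B p.1 p.2)).re
            ≤ ‖A p.1 p.2 * (starRingEnd ℂ) (B p.1 p.2)‖ := Complex.re_le_norm _
          _ = ‖A p.1 p.2‖ * ‖B p.1 p.2‖ := by
              rw [norm_mul, Complex.norm_conj]
    _ ≤ _ := Real.sum_mul_le_sqrt_mul_sqrt _ _ _

end BKaux

/-- Barnum–Knill-style step: for `S` positive definite, `M` Hermitian with `0 ≤ M ≤ I`,
and a unit vector `v`, one has `⟨v, M v⟩ ≤ √(Tr(S M)) · ⟨v, S^{−1/2} v⟩`. -/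
theorem barnum_knill_step {d : ℕ} (S M : Matrix (Fin d) (Fin d) ℂ) (hS : S.PosDef)
    (hM : M.PosSemidef) (hM1 : ((1 : Matrix (Fin d) (Fin d) ℂ) - M).PosSemidef)
    (v : Fin d → ℂ) (hv : star v ⬝ᵥ v = 1) :
    (star v ⬝ᵥ (M *ᵥ v)).re ≤
      Real.sqrt ((Matrix.trace (S * M)).re) * (star v ⬝ᵥ ((hS.posSemidef.sqrt)⁻¹ *ᵥ v)).re := by
  classical
  set R : Matrix (Fin d) (Fin d) ℂ := hS.posSemidef.sqrt with hRdef
  have hR : R.PosSemidef := hS.posSemidef.posSemidef_sqrt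
  have hRS : R * R = S := hS.posSemidef.sqrt_mul_self
  set Q : Matrix (Fin d) (Fin d) ℂ := hR.sqrt with hQdef
  have hQ : Q.PosSemidef := hR.posSemidef_sqrt
  have hQQ : Q * Q = R := hR.sqrt_mul_self
  set N : Matrix (Fin d) (Fin d) ℂ := hM.sqrt with hNdef
  have hN : N.PosSemidef := hM.posSemidef_sqrt
  have hNN : N * N = M := hM.sqrt_mul_self
  -- invertibility
  have hdetS : IsUnit S.det := (Matrix.isUnit_iff_isUnit_det S).mp hS.isUnit
  have hdetR : IsUnit R.det := by
    have : IsUnit (R.det * R.det) := by rw [← Matrix.det_mul, hRS]; exact hdetS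
    exact isUnit_of_mul_isUnit_left this
  have hdetQ : IsUnit Q.det := by
    have : IsUnit (Q.det * Q.det) := by rw [← Matrix.det_mul, hQQ]; exact hdetR
    exact isUnit_of_mul_isUnit_left this
  have hQinv : Q⁻¹ * Q = 1 := Matrix.nonsing_inv_mul Q hdetQ
  have hQinv' : Q * Q⁻¹ = 1 := Matrix.mul_nonsing_inv Q hdetQ
  have hQih : Q⁻¹ᴴ = Q⁻¹ := by
    rw [Matrix.conjTranspose_nonsing_inv, hQ.1.eq]
  set w : Fin d → ℂ := Q⁻¹ *ᵥ v with hwdef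
  set B : Matrix (Fin d) (Fin d) ℂ := vecMulVec w (star w) with hBdef
  have hBH : B.IsHermitian := by
    ext i j
    simp only [Matrix.conjTranspose_apply, hBdef, Matrix.vecMulVec_apply, Pi.star_apply,
      star_mul', star_star]
    exact mul_comm _ _
  have hAps : (Q * M * Q).PosSemidef := by
    have := hM.conjTranspose_mul_mul_same Q
    rwa [hQ.1.eq] at this
  -- trace of C * B
  have traceB : ∀ C : Matrix (Fin d) (Fin d) ℂ, (C * B).trace = star w ⬝ᵥ (C *ᵥ w) := by
    intro C
    rw [Matrix.trace, dotProduct]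
    refine Finset.sum_congr rfl fun i _ => ?_
    simp only [Matrix.diag, Matrix.mul_apply, hBdef, Matrix.vecMulVec_apply, Pi.star_apply,
      Matrix.mulVec, dotProduct, Finset.mul_sum]
    exact Finset.sum_congr rfl fun j _ => by ring
  -- conjugation identity for dot products
  have conjdot : ∀ X : Matrix (Fin d) (Fin d) ℂ,
      star w ⬝ᵥ (X *ᵥ w) = star v ⬝ᵥ ((Q⁻¹ * (X * Q⁻¹)) *ᵥ v) := by
    intro X
    rw [hwdef, Matrix.mulVec_mulVec, Matrix.star_mulVec, hQih,
      Matrix.dotProduct_mulVec, Matrix.vecMul_vecMul, ← Matrix.dotProduct_mulVec]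
  -- LHS identity
  have hL : star v ⬝ᵥ (M *ᵥ v) = ((Q * M * Q) * B).trace := by
    rw [traceB, conjdot]
    congr 2
    rw [mul_assoc (Q * M) Q Q⁻¹, hQinv', mul_one, ← mul_assoc, hQinv, one_mul]
  -- RHS vector identity
  have hRv : star v ⬝ᵥ (R⁻¹ *ᵥ v) = star w ⬝ᵥ w := by
    have h := conjdot 1
    rw [Matrix.one_mulVec, one_mul, ← Matrix.mul_inv_rev, hQQ] at h
    exact h.symm
  -- properties of c := star w ⬝ᵥ w
  have him : (star w ⬝ᵥ w).im = 0 := by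
    rw [dotProduct, Complex.im_sum]
    refine Finset.sum_eq_zero fun i _ => ?_
    simp only [Pi.star_apply, Complex.star_def, Complex.mul_im, Complex.conj_re, Complex.conj_im]
    ring
  have hre : 0 ≤ (star w ⬝ᵥ w).re := by
    rw [dotProduct, Complex.re_sum]
    refine Finset.sum_nonneg fun i _ => ?_
    simp only [Pi.star_apply, Complex.star_def, Complex.mul_re, Complex.conj_re, Complex.conj_im]
    nlinarith [sq_nonneg (w i).re, sq_nonneg (w i).im]
  -- trace of B * B
  have hBB : ((B * B).trace).re = ((star w ⬝ᵥ w).re) ^ 2 := by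
    have hBw : B *ᵥ w = (star w ⬝ᵥ w) • w := by
      ext i
      simp only [hBdef, Matrix.mulVec, dotProduct, Matrix.vecMulVec_apply, Pi.star_apply,
        Pi.smul_apply, smul_eq_mul, Finset.sum_mul]
      exact Finset.sum_congr rfl fun j _ => by ring
    rw [traceB B, hBw, dotProduct_smul, smul_eq_mul, Complex.mul_re, him]
    ring
  -- trace of (QMQ)² is at most trace (S * M)
  have eA : (((Q * M * Q) * (Q * M * Q)).trace) = ((M * R) * (M * R)).trace := by
    rw [show (Q * M * Q) * (Q * M * Q) = Q * (M * R * M * Q) from by rw [← hQQ]; noncomm_ring,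
      Matrix.trace_mul_comm,
      show (M * R * M * Q) * Q = (M * R) * (M * R) from by
        rw [mul_assoc (M * R * M) Q Q, hQQ]; noncomm_ring]
  have eD : (((N * R * N) * (N * R * N)).trace) = ((M * R) * (M * R)).trace := by
    rw [show (N * R * N) * (N * R * N) = N * ((R * M * R) * N) from by rw [← hNN]; noncomm_ring,
      Matrix.trace_mul_comm,
      show ((R * M * R) * N) * N = (R * M * R) * M from by rw [mul_assoc, hNN],
      Matrix.trace_mul_comm,
      show M * (R * M * R) = (M * R) * (M * R) from by noncomm_ring]
  have hSMRM : (S - R * M * R).PosSemidef := by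
    have h := hM1.conjTranspose_mul_mul_same R
    rw [hR.1.eq] at h
    have heq : R * (1 - M) * R = S - R * M * R := by
      rw [mul_sub, mul_one, sub_mul, hRS]
    rwa [heq] at h
  have hA2 : (((Q * M * Q) * (Q * M * Q)).trace).re ≤ ((S * M).trace).re := by
    rw [eA, ← eD]
    have hdiff : (N * S * N - N * (R * M * R) * N).PosSemidef := by
      have h := hSMRM.conjTranspose_mul_mul_same N
      rw [hN.1.eq] at h
      have heq : N * (S - R * M * R) * N = N * S * N - N * (R * M * R) * N := by
        noncomm_ring
      rwa [heq] at h
    have hmono := BKaux.trace_re_mono hdiff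
    have e1 : ((N * R * N) * (N * R * N)).trace = (N * (R * M * R) * N).trace := by
      rw [show (N * R * N) * (N * R * N) = N * (R * M * R) * N from by
        rw [← hNN]; noncomm_ring]
    have e2 : (N * S * N).trace = (S * M).trace := by
      rw [Matrix.trace_mul_cycle, hNN, Matrix.trace_mul_comm]
    rw [e1, ← e2]
    exact hmono
  -- assemble
  rw [hL, hRv]
  have cs := BKaux.trace_CS hAps.1 hBH
  refine cs.trans ?_
  rw [hBB, Real.sqrt_sq hre]
  exact mul_le_mul_of_nonneg_right (Real.sqrt_le_sqrt hA2) hre
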